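/- Let H = H₁ × ⋯ × Hₛ be a (finite) Cartesian product of nonabelian finite simple groups Hᵢ and let a be an automorphism of H. Suppose that none of the simple factors Hᵢ lies in the fixed-point subgroup C_H(a) = {h ∈ H : a(h) = h}, i.e., for each i there is an element of the i-th factor not fixed by a. Then H = [H,a], where [H,a] is the subgroup generated by all elements h⁻¹·a(h) with h ∈ H. -/

import Mathlib

/-- In a nonabelian simple group, every nontrivial element fails to commute with someone. -/
private lemma aux_noncentral {G : Type*} [Group G] [IsSimpleGroup G]
    (hna : ∃ x y : G, x * y ≠ y * x) {z : G} (hz : z ≠ 1) :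
    ∃ x : G, x * z ≠ z * x := by
  by_contra hc
  push_neg at hc
  have hzc : z ∈ Subgroup.center G := Subgroup.mem_center_iff.mpr hc
  have hcn : (Subgroup.center G).Normal := by
    constructor
    intro n hn g
    have hn' := Subgroup.mem_center_iff.mp hn
    have : g * n * g⁻¹ = n := by
      calc g * n * g⁻¹ = n * g * g⁻¹ := by rw [hn' g]
        _ = n := by group
    rw [this]; exact hn
  rcases hcn.eq_bot_or_eq_top with hb | ht
  · rw [hb] at hzc
    exact hz (Subgroup.mem_bot.mp hzc)
  · obtain ⟨x, y, hxy⟩ := hna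
    have hx : x ∈ Subgroup.center G := ht ▸ Subgroup.mem_top x
    exact hxy ((Subgroup.mem_center_iff.mp hx y).symm)

/-- If a normal subgroup of a product of groups contains an element with nontrivial `j`-th
coordinate, and the `j`-th factor is nonabelian simple, then the normal subgroup contains the
whole `j`-th factor. -/
private lemma aux_single_mem {ι : Type*} [DecidableEq ι] {H : ι → Type*}
    [∀ i, Group (H i)] (N : Subgroup (∀ i, H i)) (hN : N.Normal) (j : ι)
    [IsSimpleGroup (H j)] (hnaj : ∃ x y : H j, x * y ≠ y * x)
    (k : ∀ i, H i) (hk : k ∈ N) (hkj : k j ≠ 1) :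
    ∀ x : H j, Pi.mulSingle j x ∈ N := by
  obtain ⟨x, hx⟩ := aux_noncentral hnaj hkj
  set w : H j := (k j)⁻¹ * (x * k j * x⁻¹) with hw
  have hw1 : w ≠ 1 := by
    intro h
    apply hx
    have h2 : k j = x * k j * x⁻¹ := inv_mul_eq_one.mp h
    calc x * k j = x * k j * x⁻¹ * x := by group
      _ = k j * x := by rw [← h2]
  -- the element k⁻¹ * (single x * k * single x⁻¹) lies in N and is supported at j
  have hc : k⁻¹ * ((Pi.mulSingle j x) * k * (Pi.mulSingle j x)⁻¹) ∈ N :=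
    mul_mem (inv_mem hk) (hN.conj_mem k hk (Pi.mulSingle j x))
  have hceq : k⁻¹ * ((Pi.mulSingle j x) * k * (Pi.mulSingle j x)⁻¹) = Pi.mulSingle j w := by
    funext i
    by_cases h : i = j
    · subst h
      simp [Pi.mulSingle_eq_same, hw, mul_assoc]
    · simp [Pi.mulSingle_eq_of_ne h]
  rw [hceq] at hc
  -- the pullback of N along mulSingle j is a nontrivial normal subgroup of H j
  set T : Subgroup (H j) := N.comap (MonoidHom.mulSingle H j) with hT
  have hTnormal : T.Normal := by
    constructor
    intro n hn g
    have : (MonoidHom.mulSingle H j) (g * n * g⁻¹)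
        = Pi.mulSingle j g * Pi.mulSingle j n * (Pi.mulSingle j g)⁻¹ := by
      rw [map_mul, map_mul, map_inv]; rfl
    refine Subgroup.mem_comap.mpr ?_
    rw [this]
    exact hN.conj_mem _ (Subgroup.mem_comap.mp hn) _
  have hTtop : T = ⊤ := by
    rcases hTnormal.eq_bot_or_eq_top with hb | ht
    · exfalso
      have : w ∈ T := Subgroup.mem_comap.mpr hc
      rw [hb] at this
      exact hw1 (Subgroup.mem_bot.mp this)
    · exact ht
  intro y
  have : y ∈ T := hTtop ▸ Subgroup.mem_top y
  exact Subgroup.mem_comap.mp this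

/-- Let `H = H₁ × ⋯ × Hₛ` be a finite Cartesian product of nonabelian
finite simple groups and `a` an automorphism of `H`. If no simple factor lies in the
fixed-point subgroup of `a` (i.e. for each `i` some element of the `i`-th factor is moved
by `a`), then `H = [H, a]`, the subgroup generated by all `h⁻¹ · a(h)`. -/
theorem stmt_1 {ι : Type*} [Fintype ι] [DecidableEq ι] (H : ι → Type*)
    [∀ i, Group (H i)] [∀ i, Finite (H i)] [∀ i, IsSimpleGroup (H i)]
    (hna : ∀ i, ∃ x y : H i, x * y ≠ y * x)
    (a : MulAut (∀ i, H i))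
    (hfix : ∀ i, ∃ x : H i, a (Pi.mulSingle i x) ≠ Pi.mulSingle i x) :
    Subgroup.closure {c : ∀ i, H i | ∃ h : ∀ i, H i, c = h⁻¹ * a h} = ⊤ := by
  set S : Set (∀ i, H i) := {c : ∀ i, H i | ∃ h : ∀ i, H i, c = h⁻¹ * a h} with hS
  set K : Subgroup (∀ i, H i) := Subgroup.closure S with hK
  -- K is normal
  have hKnormal : K.Normal := by
    constructor
    intro n hn g
    induction hn using Subgroup.closure_induction with
    | mem s hs =>
        obtain ⟨h, rfl⟩ := hs
        have key : g * (h⁻¹ * a h) * g⁻¹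
            = ((h * g⁻¹)⁻¹ * a (h * g⁻¹)) * ((g⁻¹)⁻¹ * a g⁻¹)⁻¹ := by
          rw [map_mul, map_inv]
          group
        rw [key]
        exact mul_mem (Subgroup.subset_closure ⟨h * g⁻¹, rfl⟩)
          (inv_mem (Subgroup.subset_closure ⟨g⁻¹, rfl⟩))
    | one => simpa using one_mem K
    | mul x y hx hy ihx ihy =>
        have : g * (x * y) * g⁻¹ = (g * x * g⁻¹) * (g * y * g⁻¹) := by group
        rw [this]; exact mul_mem ihx ihy
    | inv x hx ihx =>
        have : g * x⁻¹ * g⁻¹ = (g * x * g⁻¹)⁻¹ := by group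
        rw [this]; exact inv_mem ihx
  -- Every mulSingle lies in K
  have hsingle : ∀ j (x : H j), Pi.mulSingle j x ∈ K := by
    intro j
    by_cases hKj : ∀ k ∈ K, k j = 1
    · -- then every element of H shares its j-coordinate with its image under a
      exfalso
      have haj : ∀ h : ∀ i, H i, (a h) j = h j := by
        intro h
        have hmem : h⁻¹ * a h ∈ K := Subgroup.subset_closure ⟨h, rfl⟩
        have := hKj _ hmem
        have : (h j)⁻¹ * (a h) j = 1 := this
        calc (a h) j = h j * ((h j)⁻¹ * (a h) j) := by group
          _ = h j * 1 := by rw [this]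
          _ = h j := mul_one _
      by_cases hex : ∀ (x : H j) (i : ι), i ≠ j → a (Pi.mulSingle j x) i = 1
      · -- then a fixes the j-th factor pointwise, contradicting hfix
        obtain ⟨x, hx⟩ := hfix j
        apply hx
        funext i
        by_cases h : i = j
        · subst h
          rw [haj (Pi.mulSingle i x)]
        · rw [hex x i h, Pi.mulSingle_eq_of_ne h]
      · push_neg at hex
        obtain ⟨x, i, hij, hi⟩ := hex
        -- the image of the j-th factor under a is a normal subgroup with
        -- nontrivial i-th projection, hence contains the i-th factor
        set N0 : Subgroup (∀ i, H i) := (MonoidHom.mulSingle H j).range with hN0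
        have hN0normal : N0.Normal := by
          constructor
          intro n hn g
          obtain ⟨z, rfl⟩ := hn
          refine ⟨g j * z * (g j)⁻¹, ?_⟩
          funext i'
          by_cases h : i' = j
          · subst h
            simp [MonoidHom.mulSingle_apply, Pi.mulSingle_eq_same]
          · simp [MonoidHom.mulSingle_apply, Pi.mulSingle_eq_of_ne h]
        set N : Subgroup (∀ i, H i) := N0.map a.toMonoidHom with hN
        have hNnormal : N.Normal := hN0normal.map a.toMonoidHom a.surjective
        have hkN : a (Pi.mulSingle j x) ∈ N := ⟨Pi.mulSingle j x, ⟨x, rfl⟩, rfl⟩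
        have hall : ∀ y : H i, Pi.mulSingle i y ∈ N :=
          aux_single_mem N hNnormal i (hna i) _ hkN hi
        obtain ⟨y, hy⟩ := exists_ne (1 : H i)
        obtain ⟨h0, ⟨x', rfl⟩, heq⟩ := hall y
        -- compare j-coordinates
        have hx'1 : x' = 1 := by
          have h1 : (a ((MonoidHom.mulSingle H j) x')) j
              = ((MonoidHom.mulSingle H j) x') j := haj _
          have h2 : ((MonoidHom.mulSingle H j) x') j = x' := by
            simp [MonoidHom.mulSingle_apply, Pi.mulSingle_eq_same]
          have h3 : (a.toMonoidHom ((MonoidHom.mulSingle H j) x')) j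
              = (Pi.mulSingle i y) j := by rw [heq]
          have h4 : (Pi.mulSingle i y) j = 1 := Pi.mulSingle_eq_of_ne (Ne.symm hij) y
          rw [← h2, ← h1]
          exact h3.trans h4
        apply hy
        subst hx'1
        have : (a.toMonoidHom ((MonoidHom.mulSingle H j) 1)) = 1 := by
          rw [map_one, map_one]
        rw [this] at heq
        have := congrFun heq.symm i
        simpa [Pi.mulSingle_eq_same] using this
    · push_neg at hKj
      obtain ⟨k, hk, hkj⟩ := hKj
      exact aux_single_mem K hKnormal j (hna j) k hk hkj
  -- conclude
  rw [Subgroup.eq_top_iff']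
  intro x
  rw [← Finset.noncommProd_mulSingle x]
  exact Subgroup.noncommProd_mem K _ fun i _ => hsingle i (x i)
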